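/- arXiv:1612.08486 — 2 statements merged into one kernel-verified Lean document; each statement's English description precedes it below -/
import Mathlib

section
/- Let a > b > 0 and let Z⁺, Z⁻ be independent, identically distributed, strictly positive integrable random variables. Then E[min{1, (a + Z⁺)/(b + Z⁻)}] > E[min{1, (b + Z⁻)/(a + Z⁺)}]. -/
open MeasureTheory

theorem stmt_5 {Ω : Type*} [MeasureSpace Ω]
    [IsProbabilityMeasure (volume : Measure Ω)]
    (a b : ℝ) (hab : b < a) (hb : 0 < b)
    (Zp Zm : Ω → ℝ) (hZpm : Measurable Zp) (hZmm : Measurable Zm)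
    (hZppos : ∀ ω, 0 < Zp ω) (hZmpos : ∀ ω, 0 < Zm ω)
    (hZpint : Integrable Zp) (hZmint : Integrable Zm)
    (hindep : ProbabilityTheory.IndepFun Zp Zm)
    (hid : ProbabilityTheory.IdentDistrib Zp Zm) :
    (∫ ω, min 1 ((b + Zm ω) / (a + Zp ω))) < ∫ ω, min 1 ((a + Zp ω) / (b + Zm ω)) := by
  have ha : (0:ℝ) < a := hb.trans hab
  -- the pair (Zp, Zm) and (Zm, Zp) are identically distributed
  have hpair : ProbabilityTheory.IdentDistrib (fun ω => (Zp ω, Zm ω))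
      (fun ω => (Zm ω, Zp ω)) (volume : Measure Ω) (volume : Measure Ω) := by
    refine ⟨(hZpm.prodMk hZmm).aemeasurable, (hZmm.prodMk hZpm).aemeasurable, ?_⟩
    rw [(ProbabilityTheory.indepFun_iff_map_prod_eq_prod_map_map hZpm.aemeasurable
      hZmm.aemeasurable).1 hindep,
      (ProbabilityTheory.indepFun_iff_map_prod_eq_prod_map_map hZmm.aemeasurable
      hZpm.aemeasurable).1 hindep.symm, hid.map_eq]
  -- rewrite LHS via exchangeability
  have hGmeas : Measurable (fun p : ℝ × ℝ => min 1 ((b + p.2) / (a + p.1))) :=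
    measurable_const.min ((measurable_const.add measurable_snd).div
      (measurable_const.add measurable_fst))
  have hswap : (∫ ω, min 1 ((b + Zm ω) / (a + Zp ω)))
      = ∫ ω, min 1 ((b + Zp ω) / (a + Zm ω)) :=
    (hpair.comp hGmeas).integral_eq
  rw [hswap]
  set F1 : Ω → ℝ := fun ω => min 1 ((b + Zp ω) / (a + Zm ω)) with hF1
  set F2 : Ω → ℝ := fun ω => min 1 ((a + Zp ω) / (b + Zm ω)) with hF2
  -- pointwise comparison
  have key : ∀ ω, F1 ω ≤ F2 ω := by
    intro ω
    have h1 : (0:ℝ) < a + Zm ω := by have := hZmpos ω; linarith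
    have h2 : (0:ℝ) < b + Zm ω := by have := hZmpos ω; linarith
    have h3 : (0:ℝ) < b + Zp ω := by have := hZppos ω; linarith
    refine min_le_min le_rfl ((div_le_div_iff₀ h1 h2).2 ?_)
    nlinarith
  -- strict comparison on the set where Zp + b < Zm + a
  have keystrict : ∀ ω, Zp ω + b < Zm ω + a → F1 ω < F2 ω := by
    intro ω hω
    have h1 : (0:ℝ) < a + Zm ω := by have := hZmpos ω; linarith
    have h2 : (0:ℝ) < b + Zm ω := by have := hZmpos ω; linarith
    have h3 : (0:ℝ) < b + Zp ω := by have := hZppos ω; linarith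
    have hlt1 : (b + Zp ω) / (a + Zm ω) < 1 := by
      rw [div_lt_one h1]; linarith
    have hlt2 : (b + Zp ω) / (a + Zm ω) < (a + Zp ω) / (b + Zm ω) := by
      rw [div_lt_div_iff₀ h1 h2]; nlinarith
    calc F1 ω ≤ (b + Zp ω) / (a + Zm ω) := min_le_right _ _
    _ < min 1 ((a + Zp ω) / (b + Zm ω)) := lt_min hlt1 hlt2
  -- integrability of both
  have bnd : ∀ (c d : ℝ) (f g : Ω → ℝ), (∀ ω, 0 < c + f ω) → (∀ ω, 0 < d + g ω) →
      Measurable f → Measurable g →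
      Integrable (fun ω => min 1 ((c + f ω) / (d + g ω))) := by
    intro c d f g hf hg hfm hgm
    refine Integrable.mono' (integrable_const (1:ℝ))
      ((measurable_const.min ((measurable_const.add hfm).div
        (measurable_const.add hgm))).aestronglyMeasurable) ?_
    filter_upwards with ω
    have h0 : (0:ℝ) ≤ (c + f ω) / (d + g ω) := le_of_lt (div_pos (hf ω) (hg ω))
    rw [Real.norm_eq_abs, abs_le]
    exact ⟨by have := le_min one_pos.le h0; linarith, min_le_left _ _⟩
  have hF1int : Integrable F1 :=
    bnd b a Zp Zm (fun ω => by have := hZppos ω; linarith)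
      (fun ω => by have := hZmpos ω; linarith) hZpm hZmm
  have hF2int : Integrable F2 :=
    bnd a b Zp Zm (fun ω => by have := hZppos ω; linarith)
      (fun ω => by have := hZmpos ω; linarith) hZpm hZmm
  -- the bad set has positive measure
  have hS : 0 < (volume : Measure Ω) {ω | Zp ω + b < Zm ω + a} := by
    by_contra h0
    push_neg at h0
    have h0' : (volume : Measure Ω) {ω | Zp ω + b < Zm ω + a} = 0 := le_antisymm h0 zero_le
    have hae : ∀ᵐ ω, Zm ω + a ≤ Zp ω + b := by
      rw [ae_iff]
      convert h0' using 2
      ext ω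
      simp [not_le]
    have hint : (∫ ω, (Zm ω + a)) ≤ ∫ ω, (Zp ω + b) :=
      integral_mono_ae (hZmint.add (integrable_const a)) (hZpint.add (integrable_const b)) hae
    rw [integral_add hZmint (integrable_const a), integral_add hZpint (integrable_const b),
      integral_const, integral_const, hid.integral_eq] at hint
    simp [measure_univ] at hint
    linarith
  -- conclude via positivity of the integral of F2 - F1
  have hdiffpos : 0 < ∫ ω, (F2 ω - F1 ω) := by
    rw [integral_pos_iff_support_of_nonneg (fun ω => sub_nonneg.2 (key ω)) (hF2int.sub hF1int)]
    refine hS.trans_le (measure_mono ?_)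
    intro ω hω
    exact ne_of_gt (sub_pos.2 (keystrict ω hω))
  have := integral_sub hF2int hF1int
  rw [this] at hdiffpos
  linarith
end

section
/- Let μ_z/μ ∈ (0, ∞) and define g(s) = 2φ(s)/(2 − 2Φ(s) + μ_z/μ) for s ≥ 0, where φ, Φ are the standard normal PDF and CDF. Then there exists a unique s* ∈ (0, ∞) with g(s*) = s*. -/
noncomputable def phi (x : ℝ) : ℝ := (Real.sqrt (2 * Real.pi))⁻¹ * Real.exp (-x^2/2)

noncomputable def PhiCdf (x : ℝ) : ℝ := ∫ t in Set.Iic x, phi t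

open Real MeasureTheory Set

lemma phi_pos (x : ℝ) : 0 < phi x := by unfold phi; positivity

lemma phi_eq (x : ℝ) : phi x = (Real.sqrt (2 * Real.pi))⁻¹ * Real.exp (-(1/2) * x^2) := by
  unfold phi; ring_nf

lemma continuous_phi : Continuous phi := by unfold phi; fun_prop

lemma integrable_phi : Integrable phi := by
  have h := (integrable_exp_neg_mul_sq (by norm_num : (0:ℝ) < 1/2)).const_mul
    (Real.sqrt (2 * Real.pi))⁻¹
  exact h.congr (Filter.Eventually.of_forall fun x => (phi_eq x).symm)

lemma integral_phi : ∫ x, phi x = 1 := by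
  have h : ∫ x, phi x = (Real.sqrt (2 * Real.pi))⁻¹ * ∫ x, Real.exp (-(1/2) * x^2) := by
    rw [← integral_const_mul]; congr 1; funext x; rw [phi_eq]
  rw [h, integral_gaussian, show Real.pi / (1/2) = 2 * Real.pi by ring,
    inv_mul_cancel₀ (by positivity : Real.sqrt (2*Real.pi) ≠ 0)]

lemma PhiCdf_le_one (x : ℝ) : PhiCdf x ≤ 1 := by
  rw [← integral_phi]
  exact setIntegral_le_integral integrable_phi
    (Filter.Eventually.of_forall fun t => (phi_pos t).le)

lemma hasDerivAt_PhiCdf (x : ℝ) : HasDerivAt PhiCdf (phi x) x := by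
  have key : ∀ y, PhiCdf 0 + (∫ t in (0:ℝ)..y, phi t) = PhiCdf y := by
    intro y
    have := intervalIntegral.integral_Iic_sub_Iic (μ := volume)
      (integrable_phi.integrableOn (s := Iic 0)) (integrable_phi.integrableOn (s := Iic y))
    simp only [PhiCdf]
    linarith [this]
  have h1 : HasDerivAt (fun y => PhiCdf 0 + ∫ t in (0:ℝ)..y, phi t) (phi x) x :=
    (intervalIntegral.integral_hasDerivAt_right
      integrable_phi.intervalIntegrable
      (continuous_phi.stronglyMeasurableAtFilter _ _)
      continuous_phi.continuousAt).const_add _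
  exact h1.congr_of_eventuallyEq (Filter.Eventually.of_forall fun y => (key y).symm)

lemma hasDerivAt_phi (x : ℝ) : HasDerivAt phi (-x * phi x) x := by
  have h : HasDerivAt (fun y : ℝ => -y^2/2) (-x) x := by
    have := ((hasDerivAt_pow 2 x).neg).div_const 2
    refine this.congr_deriv ?_; push_cast; ring
  have := (h.exp).const_mul (Real.sqrt (2 * Real.pi))⁻¹
  refine this.congr_deriv ?_
  simp only [phi]; ring

noncomputable def hfun (m : ℝ) (s : ℝ) : ℝ := s * (2 - 2 * PhiCdf s + m) - 2 * phi s

lemma hasDerivAt_hfun (m s : ℝ) : HasDerivAt (hfun m) (2 - 2 * PhiCdf s + m) s := by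
  have h1 : HasDerivAt (fun s : ℝ => s * (2 - 2 * PhiCdf s + m))
      (1 * (2 - 2 * PhiCdf s + m) + s * (0 - 2 * phi s + 0)) s := by
    exact (hasDerivAt_id s).mul
      (((hasDerivAt_const s 2).sub ((hasDerivAt_PhiCdf s).const_mul 2)).add (hasDerivAt_const s m))
  have h2 := h1.sub ((hasDerivAt_phi s).const_mul 2)
  refine h2.congr_deriv ?_
  ring

lemma strictMono_hfun (m : ℝ) (hm : 0 < m) : StrictMono (hfun m) := by
  apply strictMono_of_deriv_pos
  intro x
  rw [(hasDerivAt_hfun m x).deriv]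
  have := PhiCdf_le_one x
  linarith

theorem stmt_15 (m : ℝ) (hm : 0 < m)
    (g : ℝ → ℝ) (hg : ∀ s, g s = 2 * phi s / (2 - 2 * PhiCdf s + m)) :
    ∃! sstar : ℝ, 0 < sstar ∧ g sstar = sstar := by
  have hD : ∀ s, 0 < 2 - 2 * PhiCdf s + m := fun s => by linarith [PhiCdf_le_one s]
  have hiff : ∀ s, g s = s ↔ hfun m s = 0 := by
    intro s
    rw [hg, div_eq_iff (hD s).ne', hfun]
    constructor <;> intro h <;> linarith
  -- existence of a root of hfun in (0, s0)
  set s0 : ℝ := 2 * phi 0 / m + 1 with hs0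
  have hs0pos : 0 < s0 := by
    rw [hs0]
    have := div_pos (by linarith [phi_pos 0] : (0:ℝ) < 2 * phi 0) hm
    linarith
  have hphile : ∀ x : ℝ, phi x ≤ phi 0 := by
    intro x
    unfold phi
    refine mul_le_mul_of_nonneg_left ?_ (by positivity)
    exact Real.exp_le_exp.2 (by nlinarith [sq_nonneg x])
  have hneg : hfun m 0 < 0 := by
    simp only [hfun, zero_mul, zero_sub, neg_neg]
    nlinarith [phi_pos 0]
  have hpos : 0 < hfun m s0 := by
    have h1 : s0 * m ≤ s0 * (2 - 2 * PhiCdf s0 + m) := by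
      have := PhiCdf_le_one s0
      nlinarith
    have h2 : 2 * phi 0 < s0 * m := by
      rw [hs0]
      field_simp
      nlinarith [phi_pos 0]
    have := hphile s0
    simp only [hfun]
    nlinarith
  have hcont : ContinuousOn (hfun m) (Icc 0 s0) :=
    fun x _ => ((hasDerivAt_hfun m x).continuousAt).continuousWithinAt
  obtain ⟨c, hc, hc0⟩ := intermediate_value_Ioo (le_of_lt hs0pos) hcont
    (show (0:ℝ) ∈ Ioo (hfun m 0) (hfun m s0) from ⟨hneg, hpos⟩)
  refine ⟨c, ⟨hc.1, (hiff c).2 hc0⟩, ?_⟩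
  rintro y ⟨hy, hgy⟩
  exact (strictMono_hfun m hm).injective (((hiff y).1 hgy).trans hc0.symm)
end
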